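/- arXiv:2104.03681 — 3 statements merged into one kernel-verified Lean document; each statement's English description precedes it below -/
import Mathlib

section
/- Arden's rule for trace sets: Let S be a type (of states) and let P, Q be sets of traces over S such that every trace in Q has length at least 2. Then for every set X of traces over S, X satisfies the equation X = P ∪ (Q ∘ X) if and only if X = Q* ∘ P. In particular, Q* ∘ P is the unique solution of the equation X = P ∪ (Q ∘ X). -/
/-- A trace over a type `S` of states is a nonempty finite list of elements of `S`. -/
def Trace (S : Type*) := {l : List S // l ≠ []}

namespace Trace

variable {S : Type*}

/-- The head (first element) of a trace. -/
def head (t : Trace S) : S := t.1.head t.2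

/-- The last element of a trace. -/
def last (t : Trace S) : S := t.1.getLast t.2

/-- Fusion of two traces: `t₁ ∘ t₂ = t₁ ++ tail t₂` (meaningful when `last t₁ = head t₂`). -/
def fuse (t₁ t₂ : Trace S) : Trace S :=
  ⟨t₁.1 ++ t₂.1.tail, by simp [t₁.2]⟩

end Trace

variable {S : Type*}

/-- Fusion product of two sets of traces. -/
def fprod (T₁ T₂ : Set (Trace S)) : Set (Trace S) :=
  {t | ∃ t₁ ∈ T₁, ∃ t₂ ∈ T₂, t₁.last = t₂.head ∧ t = t₁.fuse t₂}

/-- The set `I` of all length-1 traces `[s]`, `s ∈ S`. -/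
def unitTraces (S : Type*) : Set (Trace S) := {t | ∃ s : S, t.1 = [s]}

/-- Powers of a set of traces under the fusion product: `T⁰ = I`, `Tⁿ⁺¹ = T ∘ Tⁿ`. -/
def fpow (T : Set (Trace S)) : ℕ → Set (Trace S)
  | 0 => unitTraces S
  | n + 1 => fprod T (fpow T n)

/-- Star of a set of traces under the fusion product: `T* = ⋃ n, Tⁿ`. -/
def fstar (T : Set (Trace S)) : Set (Trace S) := ⋃ n, fpow T n

/-- `box T V`: states from which every trace of `T` ends in `V`. -/
def box (T : Set (Trace S)) (V : Set S) : Set S :=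
  {s | ∀ t ∈ T, t.head = s → t.last ∈ V}

/-- `diamond T V`: states from which some trace of `T` ends in `V`. -/
def diamond (T : Set (Trace S)) (V : Set S) : Set S :=
  {s | ∃ t ∈ T, t.head = s ∧ t.last ∈ V}

/-- `boxAlways T V`: states from which every trace of `T` lies entirely in `V`. -/
def boxAlways (T : Set (Trace S)) (V : Set S) : Set S :=
  {s | ∀ t ∈ T, t.head = s → ∀ x ∈ t.1, x ∈ V}


section ArdenAux

variable {S : Type*}

lemma fuse_head' (t₁ t₂ : Trace S) : (t₁.fuse t₂).head = t₁.head := by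
  obtain ⟨l, h⟩ := t₁
  cases l with
  | nil => exact absurd rfl h
  | cons a l => rfl

lemma fuse_last' {t₁ t₂ : Trace S} (h : t₁.last = t₂.head) :
    (t₁.fuse t₂).last = t₂.last := by
  obtain ⟨l₂, h₂⟩ := t₂
  cases l₂ with
  | nil => exact absurd rfl h₂
  | cons a l =>
    cases l with
    | nil =>
      simp only [Trace.fuse, Trace.last, Trace.head, List.tail_cons, List.append_nil,
        List.getLast_singleton] at *
      exact h
    | cons b l =>
      simp only [Trace.fuse, Trace.last, List.tail_cons]
      rw [List.getLast_append_of_ne_nil (by simp)]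
      rfl

lemma fuse_len (t₁ t₂ : Trace S) :
    (t₁.fuse t₂).1.length = t₁.1.length + t₂.1.length - 1 := by
  obtain ⟨l₂, h₂⟩ := t₂
  cases l₂ with
  | nil => exact absurd rfl h₂
  | cons a l => simp [Trace.fuse]

lemma unit_fprod (T : Set (Trace S)) : fprod (unitTraces S) T = T := by
  ext t
  constructor
  · rintro ⟨t₁, ⟨s, hs⟩, t₂, ht₂, hlast, rfl⟩
    have : t₁.fuse t₂ = t₂ := by
      apply Subtype.ext
      obtain ⟨l₂, h₂⟩ := t₂
      cases l₂ with
      | nil => exact absurd rfl h₂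
      | cons a l =>
        simp only [Trace.fuse, hs, List.tail_cons, List.singleton_append]
        have : s = a := by
          have := hlast
          simp [Trace.last, Trace.head, hs] at this
          exact this
        rw [this]
    rw [this]; exact ht₂
  · intro ht
    refine ⟨⟨[t.head], by simp⟩, ⟨t.head, rfl⟩, t, ht, ?_, ?_⟩
    · simp [Trace.last]
    · apply Subtype.ext
      obtain ⟨l, h⟩ := t
      cases l with
      | nil => exact absurd rfl h
      | cons a l => simp [Trace.fuse, Trace.head]

lemma fuse_assoc (a b c : Trace S) : (a.fuse b).fuse c = a.fuse (b.fuse c) := by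
  apply Subtype.ext
  obtain ⟨l₂, h₂⟩ := b
  cases l₂ with
  | nil => exact absurd rfl h₂
  | cons x l => simp [Trace.fuse]

lemma fprod_assoc (A B C : Set (Trace S)) :
    fprod (fprod A B) C = fprod A (fprod B C) := by
  ext t
  constructor
  · rintro ⟨ab, ⟨a, ha, b, hb, hab, rfl⟩, c, hc, hbc, rfl⟩
    rw [fuse_last' hab] at hbc
    exact ⟨a, ha, b.fuse c, ⟨b, hb, c, hc, hbc, rfl⟩,
      by rw [fuse_head']; exact hab, fuse_assoc a b c⟩
  · rintro ⟨a, ha, bc, ⟨b, hb, c, hc, hbc, rfl⟩, habc, rfl⟩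
    rw [fuse_head'] at habc
    exact ⟨a.fuse b, ⟨a, ha, b, hb, habc, rfl⟩, c, hc,
      by rw [fuse_last' habc]; exact hbc, (fuse_assoc a b c).symm⟩

lemma fprod_union_left (A B C : Set (Trace S)) :
    fprod (A ∪ B) C = fprod A C ∪ fprod B C := by
  ext t
  constructor
  · rintro ⟨a, (ha | ha), c, hc, h1, h2⟩
    · exact Or.inl ⟨a, ha, c, hc, h1, h2⟩
    · exact Or.inr ⟨a, ha, c, hc, h1, h2⟩
  · rintro (⟨a, ha, c, hc, h1, h2⟩ | ⟨a, ha, c, hc, h1, h2⟩)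
    · exact ⟨a, Or.inl ha, c, hc, h1, h2⟩
    · exact ⟨a, Or.inr ha, c, hc, h1, h2⟩

lemma fstar_unfold (Q : Set (Trace S)) :
    fstar Q = unitTraces S ∪ fprod Q (fstar Q) := by
  ext t
  constructor
  · rintro ⟨s, ⟨n, rfl⟩, ht⟩
    cases n with
    | zero => exact Or.inl ht
    | succ n =>
      obtain ⟨a, ha, b, hb, h1, h2⟩ := ht
      exact Or.inr ⟨a, ha, b, Set.mem_iUnion.2 ⟨n, hb⟩, h1, h2⟩
  · rintro (ht | ⟨a, ha, b, hb, h1, h2⟩)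
    · exact Set.mem_iUnion.2 ⟨0, ht⟩
    · obtain ⟨n, hn⟩ := Set.mem_iUnion.1 hb
      exact Set.mem_iUnion.2 ⟨n + 1, a, ha, b, hn, h1, h2⟩

lemma fix_point (P Q : Set (Trace S)) :
    fprod (fstar Q) P = P ∪ fprod Q (fprod (fstar Q) P) := by
  conv_lhs => rw [fstar_unfold Q]
  rw [fprod_union_left, unit_fprod, fprod_assoc]

lemma uniq {P Q X Y : Set (Trace S)} (hQ : ∀ t ∈ Q, 2 ≤ t.1.length)
    (hX : X = P ∪ fprod Q X) (hY : Y = P ∪ fprod Q Y) : X ⊆ Y := by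
  suffices H : ∀ n, ∀ t : Trace S, t.1.length ≤ n → t ∈ X → t ∈ Y by
    intro t ht; exact H t.1.length t le_rfl ht
  intro n
  induction n with
  | zero =>
    intro t hlen _
    have : t.1 ≠ [] := t.2
    have : 1 ≤ t.1.length := List.length_pos_iff.2 this
    omega
  | succ n ih =>
    intro t hlen ht
    rw [hX] at ht
    rcases ht with ht | ⟨q, hq, x, hx, h1, rfl⟩
    · rw [hY]; exact Or.inl ht
    · have hql := hQ q hq
      have hxl : 1 ≤ x.1.length := List.length_pos_iff.2 x.2
      have hlen' : (q.fuse x).1.length = q.1.length + x.1.length - 1 := fuse_len q x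
      have : x.1.length ≤ n := by omega
      rw [hY]
      exact Or.inr ⟨q, hq, x, ih x this hx, h1, rfl⟩

end ArdenAux

/-- Arden's rule for trace sets. -/
theorem arden_traces {S : Type*} (P Q : Set (Trace S))
    (hQ : ∀ t ∈ Q, 2 ≤ t.1.length) :
    ∀ X : Set (Trace S), X = P ∪ fprod Q X ↔ X = fprod (fstar Q) P := by
  intro X
  constructor
  · intro hX
    exact Set.Subset.antisymm (uniq hQ hX (fix_point P Q)) (uniq hQ (fix_point P Q) hX)
  · intro hX
    rw [hX]
    exact fix_point P Q
end

section
/- Arden's rule for formal languages: Let α be an alphabet (any type) and let L, M, K be languages over α (sets of words, i.e., lists over α). If the empty word does not belong to M, then K satisfies the equation K = L + M * K (where + is union of languages and * is language concatenation) if and only if K = M∗ * L, where M∗ is the Kleene star of M. In particular, M∗ * L is the unique solution of the equation K = L + M * K. -/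
/-- Arden's rule for formal languages: if the empty word is not in `M`,
then `K = L + M * K` iff `K = M∗ * L` (so `M∗ * L` is the unique solution). -/
theorem arden_language {α : Type*} (L M K : Language α) (h : [] ∉ M) :
    K = L + M * K ↔ K = KStar.kstar M * L := by
  constructor
  · intro hK
    apply le_antisymm
    · -- K ⊆ M∗ * L by strong induction on length
      suffices H : ∀ n (x : List α), x.length = n → x ∈ K → x ∈ KStar.kstar M * L by
        intro x hx; exact H x.length x rfl hx
      intro n
      induction n using Nat.strong_induction_on with
      | _ n ih =>
        intro x hn hx
        subst hn
        rw [hK] at hx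
        rcases hx with hx | ⟨u, hu, v, hv, rfl⟩
        · exact ⟨[], Language.nil_mem_kstar M, x, hx, by simp⟩
        · have hune : u ≠ [] := fun e => h (e ▸ hu)
          have hvlt : v.length < (u ++ v).length := by
            simp [List.length_append]
            exact List.length_pos_iff.mpr hune
          obtain ⟨s, hs, t, ht, rfl⟩ := ih v.length hvlt v rfl hv
          have hus : u ++ s ∈ M * KStar.kstar M := ⟨u, hu, s, hs, rfl⟩
          have hsub : M * KStar.kstar M ≤ KStar.kstar M := mul_kstar_le_kstar
          exact ⟨u ++ s, hsub hus, t, ht, by simp⟩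
    · -- M∗ * L ⊆ K
      have hL : L ≤ K := by rw [hK]; exact le_sup_left
      have hMK : M * K ≤ K := by nth_rewrite 2 [hK]; exact le_sup_right
      calc KStar.kstar M * L ≤ KStar.kstar M * K := mul_le_mul_right hL _
        _ ≤ K := kstar_mul_le_self hMK
  · rintro rfl
    rw [← mul_assoc]
    nth_rewrite 1 [← Language.one_add_self_mul_kstar_eq_kstar M]
    rw [add_mul, one_mul]
end

section
/- Semantic soundness of the assignment rule: Let S be a type (of states) and f : S → S a function (interpreting an assignment). Let T_f = { [s, f s] | s ∈ S } be the set of length-2 traces realizing f. Then for every set T of traces over S and every set V of states, box(T_f ∘ T, V) = { s ∈ S | f s ∈ box(T, V) }. -/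
variable {S : Type*}

namespace Trace

theorem head_fuse {S : Type*} (t₁ t₂ : Trace S) : (t₁.fuse t₂).head = t₁.head := by
  simp [fuse, head, List.head_append_of_ne_nil t₁.2]

theorem last_fuse {S : Type*} (t₁ t₂ : Trace S) (h : t₁.last = t₂.head) :
    (t₁.fuse t₂).last = t₂.last := by
  obtain ⟨l, hl⟩ := t₂
  cases l with
  | nil => exact absurd rfl hl
  | cons a l =>
    cases l with
    | nil => simpa [fuse, last, head] using h
    | cons b l => simp [fuse, last, head, List.getLast_append_of_ne_nil]

end Trace

/-- semantic soundness of the assignment rule. -/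
theorem box_assign {S : Type*} (f : S → S) (T : Set (Trace S)) (V : Set S) :
    box (fprod {t : Trace S | ∃ s : S, t.1 = [s, f s]} T) V
      = {s : S | f s ∈ box T V} := by
  ext s
  constructor
  · intro h t₂ ht₂ hhead
    set t₁ : Trace S := ⟨[s, f s], by simp⟩ with ht₁
    have hlast : t₁.last = t₂.head := by
      simp [Trace.last, ht₁]; exact hhead.symm
    have := h (t₁.fuse t₂) ⟨t₁, ⟨s, rfl⟩, t₂, ht₂, hlast, rfl⟩
      (by rw [Trace.head_fuse]; rfl)
    rwa [Trace.last_fuse t₁ t₂ hlast] at this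
  · rintro h t ⟨t₁, ⟨s', hs'⟩, t₂, ht₂, hlast, rfl⟩ hhead
    have hh : t₁.head = s := by rwa [Trace.head_fuse] at hhead
    have hs : s' = s := by
      have := hh
      simp [Trace.head, hs'] at this
      exact this
    have hl : t₁.last = f s := by simp [Trace.last, hs', hs]
    rw [Trace.last_fuse t₁ t₂ hlast]
    exact h t₂ ht₂ (by rw [← hlast, hl])
end
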